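/- Let u : Fin N → ℝ be a probability mass function with positive entries. Then the map ϖ ↦ 0 is the unique real solution of the system f(ϖ, x) = u x for all x, where f(ϖ, x) = u x * exp(ϖ*(1 - u x)) / (∑ i, u i * exp(ϖ*(1 - u i))), provided u is not the uniform distributon (not all u i equal). That is, if f(ϖ, x) = u x for every x ∈ Fin N, then ϖ = 0. -/

import Mathlib

theorem stmt_18 (N : ℕ) (hN : 2 ≤ N) (u : Fin N → ℝ)
    (hpos : ∀ i, 0 < u i) (hsum : ∑ i, u i = 1)
    (hne : ∃ i j, u i ≠ u j)
    (ϖ : ℝ)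
    (hfix : ∀ x, u x * Real.exp (ϖ * (1 - u x)) /
      (∑ i, u i * Real.exp (ϖ * (1 - u i))) = u x) :
    ϖ = 0 := by
  set Z := ∑ i, u i * Real.exp (ϖ * (1 - u i)) with hZ
  have hZpos : 0 < Z := by
    apply Finset.sum_pos
    · intro i _
      exact mul_pos (hpos i) (Real.exp_pos _)
    · exact Finset.univ_nonempty_iff.2 ⟨⟨0, by omega⟩⟩
  have key : ∀ x, Real.exp (ϖ * (1 - u x)) = Z := by
    intro x
    have h := hfix x
    field_simp at h
    rcases mul_eq_mul_left_iff.1 (show u x * Real.exp (ϖ * (1 - u x)) = u x * Z by linarith) with h | h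
    · exact h
    · exact absurd h (ne_of_gt (hpos x))
  obtain ⟨i, j, hij⟩ := hne
  have : ϖ * (1 - u i) = ϖ * (1 - u j) := by
    have := (key i).trans (key j).symm
    exact Real.exp_injective this
  have : ϖ * (u j - u i) = 0 := by ring_nf; linarith [this]
  rcases mul_eq_zero.1 this with h | h
  · exact h
  · exact absurd (by linarith : u i = u j) hij
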